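/- Let L*(g)(r) = g'(r) + V(r)g(r) with V(r) = (2/r)·(1-r²)/(1+r²) + 1/r. If g ∈ C¹([0,∞)) ∩ L²((0,∞), r dr) with L*g ∈ L²((0,∞), r dr), g(0) = 0 and lim_{r→∞} g(r) = 0, then ‖L*g‖²_{L²(rdr)} = ∫₀^∞ (g'(r)² + g(r)²·(9 + 2r² + r⁴)/(r + r³)²) r dr; in particular ‖g‖_{Ḣ¹ₑ} ≤ C‖L*g‖_{L²(rdr)}. -/

import Mathlib

open MeasureTheory Set Filter

noncomputable def V (r : ℝ) : ℝ := (2/r) * ((1 - r^2) / (1 + r^2)) + 1/r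

noncomputable def Lstar (g : ℝ → ℝ) (r : ℝ) : ℝ := deriv g r + V r * g r

theorem Lstar_norm_identity :
    ∃ C > 0, ∀ g : ℝ → ℝ,
      (∀ x : ℝ, 0 ≤ x → DifferentiableAt ℝ g x) →
      ContinuousOn (deriv g) (Set.Ici 0) →
      MeasureTheory.IntegrableOn (fun r => (g r)^2 * r) (Set.Ioi 0) →
      MeasureTheory.IntegrableOn (fun r => (Lstar g r)^2 * r) (Set.Ioi 0) →
      g 0 = 0 →
      Filter.Tendsto g Filter.atTop (nhds 0) →
      (∫ r in Set.Ioi (0:ℝ), (Lstar g r)^2 * r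
          = ∫ r in Set.Ioi (0:ℝ),
              ((deriv g r)^2 + (g r)^2 * (9 + 2*r^2 + r^4) / (r + r^3)^2) * r)
      ∧ ∫ r in Set.Ioi (0:ℝ), ((deriv g r)^2 + (g r)^2 / r^2) * r
          ≤ C * ∫ r in Set.Ioi (0:ℝ), (Lstar g r)^2 * r := by
  refine ⟨1, one_pos, fun g hdiff hdc hgL2 hLL2 hg0 hgtop => ?_⟩
  set Lf : ℝ → ℝ := fun r => (Lstar g r)^2 * r with hLf
  set Rf : ℝ → ℝ := fun r =>
    ((deriv g r)^2 + (g r)^2 * (9 + 2*r^2 + r^4) / (r + r^3)^2) * r with hRf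
  set W : ℝ → ℝ := fun r => (3 - r^2) / (1 + r^2) with hW
  set F : ℝ → ℝ := fun r => W r * (g r)^2 with hF
  set I : ℝ := ∫ r in Set.Ioi (0:ℝ), Lf r with hI
  -- continuity of g on Ici 0
  have hgc : ContinuousOn g (Set.Ici 0) :=
    fun x hx => (hdiff x hx).continuousAt.continuousWithinAt
  -- derivative of W
  have hWd : ∀ r : ℝ, HasDerivAt W (-8*r/(1+r^2)^2) r := by
    intro r
    have h2 : (1 + r^2) ≠ 0 := by positivity
    have hnum : HasDerivAt (fun r : ℝ => 3 - r^2) (-(2*r)) r := by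
      simpa using ((hasDerivAt_pow 2 r).const_sub 3)
    have hden : HasDerivAt (fun r : ℝ => 1 + r^2) (2*r) r := by
      simpa using ((hasDerivAt_pow 2 r).const_add 1)
    have := hnum.div hden h2
    refine this.congr_deriv ?_
    rw [div_eq_div_iff (by positivity) (by positivity)]
    ring
  -- derivative of F at points where g is differentiable
  have hFd : ∀ r : ℝ, 0 ≤ r → HasDerivAt F
      ((-8*r/(1+r^2)^2) * (g r)^2 + W r * (2 * g r * deriv g r)) r := by
    intro r hr
    have hg : HasDerivAt g (deriv g r) r := (hdiff r hr).hasDerivAt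
    have hg2 : HasDerivAt (fun x => (g x)^2) (2 * g r * deriv g r) r := by
      have := (hg.pow 2)
      exact (by simpa [mul_comm, mul_assoc, mul_left_comm] using this : HasDerivAt (g^2) (2 * g r * deriv g r) r)
    exact (hWd r).mul hg2
  -- pointwise identity
  have hkey : ∀ r : ℝ, 0 < r → Lf r - Rf r
      = (-8*r/(1+r^2)^2) * (g r)^2 + W r * (2 * g r * deriv g r) := by
    intro r hr
    have h1 : r ≠ 0 := ne_of_gt hr
    have h2 : (1 + r^2) ≠ 0 := by positivity
    have h3 : (r + r^3) ≠ 0 := by positivity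
    simp only [hLf, hRf, hW, Lstar, V]
    field_simp
    ring
  -- continuity of V on Ioi 0
  have hVc : ContinuousOn V (Set.Ioi 0) := by
    intro x hx
    have hx0 : (x:ℝ) ≠ 0 := ne_of_gt hx
    have h2 : (1 + x^2) ≠ 0 := by positivity
    apply ContinuousAt.continuousWithinAt
    unfold V
    fun_prop (disch := intros; first | exact hx0 | positivity)
  -- continuity of Lf and Rf on Ioi 0 within Ici 0 pieces
  have hLc : ContinuousOn Lf (Set.Ioi 0) := by
    have : ContinuousOn (fun r => Lstar g r) (Set.Ioi 0) := by
      apply ContinuousOn.add (hdc.mono Ioi_subset_Ici_self)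
      exact hVc.mul (hgc.mono Ioi_subset_Ici_self)
    exact (this.pow 2).mul continuousOn_id
  have hRc : ContinuousOn Rf (Set.Ioi 0) := by
    apply ContinuousOn.mul _ continuousOn_id
    apply ContinuousOn.add (((hdc.mono Ioi_subset_Ici_self)).pow 2)
    apply ContinuousOn.div
    · exact (((hgc.mono Ioi_subset_Ici_self)).pow 2).mul (by fun_prop)
    · fun_prop
    · intro x hx
      have : (0:ℝ) < x := hx
      positivity
  -- sequences
  set a : ℕ → ℝ := fun n => 1 / (n + 1) with ha
  set b : ℕ → ℝ := fun n => (n : ℝ) with hb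
  have ha_pos : ∀ n, 0 < a n := fun n => by positivity
  have ha_lim : Tendsto a atTop (nhds 0) := tendsto_one_div_add_atTop_nhds_zero_nat
  have hb_lim : Tendsto b atTop atTop := tendsto_natCast_atTop_atTop
  set φ : ℕ → Set ℝ := fun n => Set.Ioc (a n) (b n) with hφdef
  set μ : Measure ℝ := volume.restrict (Set.Ioi 0) with hμ
  have hcov : AECover μ atTop φ := by
    constructor
    · rw [hμ, ae_restrict_iff' measurableSet_Ioi]
      filter_upwards with x hx
      have h1 : ∀ᶠ n in atTop, a n < x := ha_lim.eventually (gt_mem_nhds hx)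
      have h2 : ∀ᶠ n in atTop, x ≤ b n := hb_lim.eventually (eventually_ge_atTop x)
      filter_upwards [h1, h2] with n hn1 hn2
      exact ⟨hn1, hn2⟩
    · intro n; exact measurableSet_Ioc
  -- FTC on intervals
  have hstep : ∀ n : ℕ, a n ≤ b n →
      (∫ x in (a n)..(b n), Rf x) = (∫ x in (a n)..(b n), Lf x) - F (b n) + F (a n) := by
    intro n hab
    have hsub : Set.uIcc (a n) (b n) ⊆ Set.Ioi 0 := by
      rw [Set.uIcc_of_le hab]
      intro x hx
      exact lt_of_lt_of_le (ha_pos n) hx.1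
    have hLint : IntervalIntegrable Lf volume (a n) (b n) :=
      (hLc.mono hsub).intervalIntegrable
    have hRint : IntervalIntegrable Rf volume (a n) (b n) :=
      (hRc.mono hsub).intervalIntegrable
    have hftc : (∫ x in (a n)..(b n), (Lf x - Rf x)) = F (b n) - F (a n) := by
      apply intervalIntegral.integral_eq_sub_of_hasDerivAt
      · intro x hx
        have hx0 : 0 < x := hsub hx
        rw [hkey x hx0]
        exact hFd x hx0.le
      · exact hLint.sub hRint
    rw [intervalIntegral.integral_sub hLint hRint] at hftc
    linarith
  -- limits of boundary terms
  have hWbd : ∀ r : ℝ, |W r| ≤ 3 := by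
    intro r
    have h2 : (0:ℝ) < 1 + r^2 := by positivity
    rw [hW, abs_div, abs_of_pos h2, div_le_iff₀ h2]
    rw [abs_le]
    constructor <;> nlinarith
  have hFb : Tendsto (fun n => F (b n)) atTop (nhds 0) := by
    have hbound : ∀ n, ‖F (b n)‖ ≤ 3 * (g (b n))^2 := by
      intro n
      calc ‖F (b n)‖ = |W (b n)| * (g (b n))^2 := by
            rw [hF, Real.norm_eq_abs, abs_mul, abs_pow, sq_abs]
        _ ≤ 3 * (g (b n))^2 := by
            apply mul_le_mul_of_nonneg_right (hWbd _) (sq_nonneg _)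
    have htnd : Tendsto (fun n => 3 * (g (b n))^2) atTop (nhds 0) := by
      have h1 : Tendsto (fun n => g (b n)) atTop (nhds 0) := hgtop.comp hb_lim
      have := ((h1.pow 2).const_mul 3)
      simpa using this
    exact squeeze_zero_norm hbound htnd
  have hFa : Tendsto (fun n => F (a n)) atTop (nhds 0) := by
    have hFc : ContinuousAt F 0 := by
      have hgc0 : ContinuousAt g 0 := (hdiff 0 le_rfl).continuousAt
      have : ContinuousAt W 0 := (hWd 0).continuousAt
      exact (this.mul (hgc0.pow 2))
    have := hFc.tendsto.comp ha_lim
    simpa [hF, hg0, Function.comp_def] using this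
  -- interval integrals of Lf tend to I
  have hLtend : Tendsto (fun n => ∫ x in (a n)..(b n), Lf x) atTop (nhds I) := by
    have h0 := hcov.integral_tendsto_of_countably_generated (f := Lf) hLL2
    apply h0.congr'
    filter_upwards [hb_lim.eventually (eventually_ge_atTop 1)] with n hn
    have hab : a n ≤ b n := by
      have : a n ≤ 1 := by
        rw [ha]
        rw [div_le_one (by positivity)]
        simp
      linarith
    have hsub : φ n ⊆ Set.Ioi 0 := fun x hx => lt_of_lt_of_le (ha_pos n) hx.1.le
    rw [hφdef, hμ, Measure.restrict_restrict measurableSet_Ioc,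
      Set.inter_eq_self_of_subset_left hsub, intervalIntegral.integral_of_le hab]
  -- integrals of Rf over φ n tend to I
  have hRInt : ∀ n, IntegrableOn Rf (φ n) μ := by
    intro n
    rw [IntegrableOn, hμ, Measure.restrict_restrict measurableSet_Ioc]
    have hsub : φ n ∩ Set.Ioi 0 ⊆ Set.Ioi 0 := Set.inter_subset_right
    rcases le_or_gt (a n) (b n) with hab | hab
    · have : φ n ∩ Set.Ioi 0 = φ n := Set.inter_eq_self_of_subset_left
        (fun x hx => lt_of_lt_of_le (ha_pos n) hx.1.le)
      rw [this]
      have : IntegrableOn Rf (Set.Icc (a n) (b n)) volume := by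
        apply ContinuousOn.integrableOn_Icc
        apply hRc.mono
        intro x hx
        exact lt_of_lt_of_le (ha_pos n) hx.1
      exact this.mono_set Set.Ioc_subset_Icc_self
    · rw [Set.Ioc_eq_empty (not_lt.mpr hab.le)]
      simp
  have hRtend : Tendsto (fun n => ∫ x in φ n, Rf x ∂μ) atTop (nhds I) := by
    have h1 : Tendsto (fun n => (∫ x in (a n)..(b n), Lf x) - F (b n) + F (a n))
        atTop (nhds (I - 0 + 0)) := (hLtend.sub hFb).add hFa
    rw [sub_zero, add_zero] at h1
    apply h1.congr'
    filter_upwards [hb_lim.eventually (eventually_ge_atTop 1)] with n hn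
    have hab : a n ≤ b n := by
      have : a n ≤ 1 := by
        rw [ha, div_le_one (by positivity)]; simp
      linarith
    have hsub : φ n ⊆ Set.Ioi 0 := fun x hx => lt_of_lt_of_le (ha_pos n) hx.1.le
    rw [← hstep n hab, hφdef, hμ, Measure.restrict_restrict measurableSet_Ioc,
      Set.inter_eq_self_of_subset_left hsub, intervalIntegral.integral_of_le hab]
  have hRnn : 0 ≤ᵐ[μ] Rf := by
    rw [hμ, EventuallyLE, ae_restrict_iff' measurableSet_Ioi]
    filter_upwards with x hx
    have hx' : (0:ℝ) < x := hx
    simp only [hRf, Pi.zero_apply]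
    positivity
  have hmain : (∫ x, Rf x ∂μ) = I :=
    hcov.integral_eq_of_tendsto_of_nonneg_ae I hRnn hRInt hRtend
  have hRintOn : Integrable Rf μ :=
    hcov.integrable_of_integral_tendsto_of_nonneg_ae I hRInt hRnn hRtend
  constructor
  · rw [hI] at hmain
    exact hmain.symm
  · rw [one_mul]
    have hle : (∫ r in Set.Ioi (0:ℝ), ((deriv g r)^2 + (g r)^2 / r^2) * r)
        ≤ ∫ x, Rf x ∂μ := by
      rw [hμ]
      apply integral_mono_of_nonneg
      · rw [EventuallyLE, ae_restrict_iff' measurableSet_Ioi]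
        filter_upwards with x hx
        have hx' : (0:ℝ) < x := hx
        simp only [Pi.zero_apply]
        positivity
      · exact hRintOn
      · rw [EventuallyLE, ae_restrict_iff' measurableSet_Ioi]
        filter_upwards with x hx
        have hx' : (0:ℝ) < x := hx
        simp only [hRf]
        apply mul_le_mul_of_nonneg_right _ hx'.le
        apply add_le_add_right
        rw [div_le_div_iff₀ (by positivity) (by positivity)]
        nlinarith [sq_nonneg (g x), sq_nonneg x, sq_nonneg (x*x), mul_pos hx' hx']
    calc (∫ r in Set.Ioi (0:ℝ), ((deriv g r)^2 + (g r)^2 / r^2) * r)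
        ≤ ∫ x, Rf x ∂μ := hle
      _ = I := hmain
      _ = _ := by rw [hI]
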